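/- Let H be a real Hilbert space, let m ≥ 1, and for each i ∈ {1,…,m} let α_i ∈ (0,1), let T_i : H → H be α_i-averaged, and let (e_{i,n})_{n∈ℕ} be a sequence in H. Set α = m·max{α_1,…,α_m}/(1+(m−1)·max{α_1,…,α_m}), let (λ_n)_{n∈ℕ} be a sequence in (0, 1/α), suppose Fix(T_1∘⋯∘T_m) ≠ ∅, suppose Σ_{n∈ℕ} λ_n(1−αλ_n) = +∞ and Σ_{n∈ℕ} λ_n‖e_{i,n}‖ < +∞ for every i, let z_0 ∈ H and define z_{n+1} = z_n + λ_n( T_1(T_2(⋯T_{m−1}(T_m z_n + e_{m,n}) + e_{m−1,n}⋯) + e_{2,n}) + e_{1,n} − z_n ). Then (T_1∘⋯∘T_m) z_n − z_n converges strongly to 0. -/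

import Mathlib

open Filter Topology
open scoped RealInnerProductSpace

variable {H : Type*} [NormedAddCommGroup H] [InnerProductSpace ℝ H] [CompleteSpace H]

/-- `T` is nonexpansive. -/
def IsNonexpansiveOp (T : H → H) : Prop :=
  ∀ x y, ‖T x - T y‖ ≤ ‖x - y‖

/-- `T` is `α`-averaged: `T = (1 - α) • Id + α • R` for some nonexpansive `R`. -/
def IsAveragedOp (α : ℝ) (T : H → H) : Prop :=
  ∃ R : H → H, IsNonexpansiveOp R ∧ ∀ x, T x = (1 - α) • x + α • R x

/-- `z n` converges weakly to `w`. -/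
def WeakLim (z : ℕ → H) (w : H) : Prop :=
  ∀ y : H, Tendsto (fun n => ⟪z n, y⟫) atTop (nhds ⟪w, y⟫)

/-- `compFrom T i k = T i ∘ T (i+1) ∘ ⋯ ∘ T (i+k-1)`; in particular
`compFrom T 1 m = T 1 ∘ ⋯ ∘ T m` and `compFrom T i 0 = id`. -/
def compFrom (T : ℕ → H → H) : ℕ → ℕ → H → H
  | _, 0 => id
  | i, (k + 1) => T i ∘ compFrom T (i + 1) k

/-- Inexact composition with errors: `inexactFrom T e 1 m z =
T 1 (T 2 (⋯ T (m-1) (T m z + e m) + e (m-1) ⋯) + e 2) + e 1`. -/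
def inexactFrom (T : ℕ → H → H) (e : ℕ → H) : ℕ → ℕ → H → H
  | _, 0 => id
  | i, (k + 1) => fun z => T i (inexactFrom T e (i + 1) k z) + e i

lemma key_identity (α : ℝ) (a b : H) :
    ‖(1-α)•a + α•b‖^2 + α*(1-α)*‖a-b‖^2 = (1-α)*‖a‖^2 + α*‖b‖^2 := by
  have h1 : ∀ v : H, ‖v‖^2 = ⟪v, v⟫ := fun v => (real_inner_self_eq_norm_sq v).symm
  simp only [h1, inner_add_left, inner_add_right, inner_sub_left, inner_sub_right,
    real_inner_smul_left, real_inner_smul_right]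
  ring_nf

lemma avg_iff {α : ℝ} (hα0 : 0 < α) (hα1 : α < 1) (T : H → H) :
    IsAveragedOp α T ↔
      ∀ x y, ‖T x - T y‖^2 + (1-α)/α * ‖(x - T x) - (y - T y)‖^2 ≤ ‖x - y‖^2 := by
  constructor
  · rintro ⟨R, hR, hTR⟩ x y
    set a := x - y with ha
    set b := R x - R y with hb
    have hba : ‖b‖ ≤ ‖a‖ := hR x y
    have e1 : T x - T y = (1-α)•a + α•b := by rw [hTR x, hTR y, ha, hb]; module
    have e2 : (x - T x) - (y - T y) = α • (a - b) := by rw [hTR x, hTR y]; module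
    rw [e1, e2, norm_smul]
    have h3 : ‖(1-α)•a + α•b‖^2 + α*(1-α)*‖a-b‖^2 = (1-α)*‖a‖^2 + α*‖b‖^2 :=
      key_identity α a b
    have h4 : (‖α‖ * ‖a - b‖)^2 = α^2 * ‖a-b‖^2 := by
      rw [mul_pow, Real.norm_eq_abs, sq_abs]
    rw [h4]
    have h5 : (1-α)/α * (α^2 * ‖a-b‖^2) = α*(1-α)*‖a-b‖^2 := by
      field_simp
    rw [h5]
    have hprod : ‖b‖^2 ≤ ‖a‖^2 := by nlinarith [norm_nonneg b]
    nlinarith [hprod, hα0, hα1]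
  · intro h
    refine ⟨fun x => x + α⁻¹ • (T x - x), ?_, fun x => by
      have : α • (α⁻¹ • (T x - x)) = T x - x := by
        rw [smul_smul, mul_inv_cancel₀ hα0.ne']; simp
      rw [smul_add, this]; module⟩
    intro x y
    set a := x - y with ha
    set c := (T x - x) - (T y - y) with hc
    have hxy : ‖T x - T y‖^2 + (1-α)/α * ‖(x - T x) - (y - T y)‖^2 ≤ ‖x - y‖^2 := h x y
    have e1 : T x - T y = a + c := by rw [ha, hc]; abel
    have e2 : (x - T x) - (y - T y) = -c := by rw [hc]; abel
    rw [e1, e2, norm_neg] at hxy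
    have hexp : ‖a + c‖^2 = ‖a‖^2 + 2*⟪a,c⟫ + ‖c‖^2 := by
      simp only [← real_inner_self_eq_norm_sq, inner_add_add_self]
      rw [real_inner_comm c a]; ring
    have hkey : 2*⟪a,c⟫ + α⁻¹ * ‖c‖^2 ≤ 0 := by
      rw [hexp] at hxy
      have : (1-α)/α = α⁻¹ - 1 := by field_simp
      nlinarith [hxy]
    have e3 : (x + α⁻¹ • (T x - x)) - (y + α⁻¹ • (T y - y)) = a + α⁻¹ • c := by
      rw [ha, hc]; module
    rw [e3]
    have hexp2 : ‖a + α⁻¹ • c‖^2 = ‖a‖^2 + 2*α⁻¹*⟪a,c⟫ + α⁻¹^2*‖c‖^2 := by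
      simp only [← real_inner_self_eq_norm_sq, inner_add_add_self, real_inner_smul_left,
        real_inner_smul_right]
      rw [real_inner_comm c a]; ring
    have hsq : ‖a + α⁻¹ • c‖^2 ≤ ‖a‖^2 := by
      rw [hexp2]
      have hαi : 0 < α⁻¹ := by positivity
      nlinarith [hkey]
    nlinarith [norm_nonneg (a + α⁻¹ • c), norm_nonneg a]

lemma avg_mono {α β : ℝ} {T : H → H} (hα : α ∈ Set.Ioo (0:ℝ) 1) (hβ : β ∈ Set.Ioo (0:ℝ) 1)
    (hle : α ≤ β) (h : IsAveragedOp α T) : IsAveragedOp β T := by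
  rw [avg_iff hα.1 hα.2] at h
  rw [avg_iff hβ.1 hβ.2]
  intro x y
  have h1 := h x y
  have h2 : (1-β)/β ≤ (1-α)/α := by
    rw [div_le_div_iff₀ hβ.1 hα.1]; nlinarith [hα.1, hβ.1]
  nlinarith [sq_nonneg ‖(x - T x) - (y - T y)‖, hα.1, hβ.1]

lemma avg_nonexp {α : ℝ} {T : H → H} (hα : α ∈ Set.Ioo (0:ℝ) 1) (h : IsAveragedOp α T) :
    IsNonexpansiveOp T := by
  obtain ⟨R, hR, hTR⟩ := h
  intro x y
  have e1 : T x - T y = (1-α) • (x - y) + α • (R x - R y) := by rw [hTR x, hTR y]; module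
  rw [e1]
  calc ‖(1-α) • (x - y) + α • (R x - R y)‖ ≤ ‖(1-α) • (x - y)‖ + ‖α • (R x - R y)‖ :=
        norm_add_le _ _
    _ ≤ (1-α) * ‖x - y‖ + α * ‖x - y‖ := by
        rw [norm_smul, norm_smul, Real.norm_eq_abs, Real.norm_eq_abs,
          abs_of_pos (by linarith [hα.2] : (0:ℝ) < 1 - α), abs_of_pos hα.1]
        have := hR x y
        nlinarith [hα.1, hα.2]
    _ = ‖x - y‖ := by ring

lemma avg_comp {α1 α2 : ℝ} {T1 T2 : H → H} (h1 : α1 ∈ Set.Ioo (0:ℝ) 1) (h2 : α2 ∈ Set.Ioo (0:ℝ) 1)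
    (hT1 : IsAveragedOp α1 T1) (hT2 : IsAveragedOp α2 T2) :
    IsAveragedOp ((α1+α2-2*α1*α2)/(1-α1*α2)) (T1 ∘ T2) := by
  obtain ⟨hα10, hα11⟩ := h1
  obtain ⟨hα20, hα21⟩ := h2
  set α := (α1+α2-2*α1*α2)/(1-α1*α2) with hαdef
  have hden : 0 < 1 - α1*α2 := by nlinarith
  have hnum : 0 < α1+α2-2*α1*α2 := by nlinarith
  have hα0 : 0 < α := div_pos hnum hden
  have hα1' : α < 1 := by
    rw [hαdef, div_lt_one hden]; nlinarith
  set δ1 := (1-α1)/α1 with hδ1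
  set δ2 := (1-α2)/α2 with hδ2
  have hδ10 : 0 < δ1 := div_pos (by linarith) hα10
  have hδ20 : 0 < δ2 := div_pos (by linarith) hα20
  have hδeq : (1-α)/α = δ1*δ2/(δ1+δ2) := by
    have h1 : α1 ≠ 0 := hα10.ne'
    have h2 : α2 ≠ 0 := hα20.ne'
    have h3 : α1+α2-2*α1*α2 ≠ 0 := hnum.ne'
    have h4 : (1:ℝ)-α1*α2 ≠ 0 := hden.ne'
    have h5 : δ1+δ2 ≠ 0 := by
      have : δ1+δ2 = (α1+α2-2*α1*α2)/(α1*α2) := by rw [hδ1, hδ2]; field_simp; ring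
      rw [this]
      exact div_ne_zero h3 (mul_ne_zero h1 h2)
    have lhs : (1-α)/α = (1-α1)*(1-α2)/(α1+α2-2*α1*α2) := by
      rw [hαdef]; field_simp; ring
    have rhs : δ1*δ2/(δ1+δ2) = (1-α1)*(1-α2)/(α1+α2-2*α1*α2) := by
      rw [div_eq_iff h5, hδ1, hδ2]; field_simp; rw [eq_div_iff (by contrapose! h3; linarith)]; ring
    rw [lhs, rhs]
  rw [avg_iff hα0 hα1']
  intro x y
  have hA := (avg_iff hα10 hα11 T1).mp hT1 (T2 x) (T2 y)
  have hB := (avg_iff hα20 hα21 T2).mp hT2 x y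
  set u := (x - T2 x) - (y - T2 y) with hu
  set v := (T2 x - T1 (T2 x)) - (T2 y - T1 (T2 y)) with hv
  have e1 : (x - (T1 ∘ T2) x) - (y - (T1 ∘ T2) y) = u + v := by
    simp only [Function.comp_apply, hu, hv]; abel
  rw [e1]
  have hsum : ‖u + v‖ ≤ ‖u‖ + ‖v‖ := norm_add_le u v
  have hkey : (1-α)/α * ‖u + v‖^2 ≤ δ2 * ‖u‖^2 + δ1 * ‖v‖^2 := by
    rw [hδeq]
    rw [div_mul_eq_mul_div, div_le_iff₀ (by positivity)]
    have h2 : ‖u+v‖^2 ≤ (‖u‖+‖v‖)^2 := by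
      nlinarith [hsum, norm_nonneg (u+v), norm_nonneg u, norm_nonneg v]
    nlinarith [h2, sq_nonneg (δ2*‖u‖ - δ1*‖v‖), mul_pos hδ10 hδ20, norm_nonneg u, norm_nonneg v]
  have heq2 : ‖(T1 ∘ T2) x - (T1 ∘ T2) y‖^2 = ‖T1 (T2 x) - T1 (T2 y)‖^2 := rfl
  rw [heq2, ← hδ1] at *
  rw [← hδ2] at hB
  linarith [hA, hB, hkey]

lemma beta_mem (M : ℝ) (hM : M ∈ Set.Ioo (0:ℝ) 1) (k : ℕ) (hk : 1 ≤ k) :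
    ((k:ℝ)*M/(1+((k:ℝ)-1)*M)) ∈ Set.Ioo (0:ℝ) 1 := by
  have hk1 : (1:ℝ) ≤ (k:ℝ) := by exact_mod_cast hk
  have hden : 0 < 1 + ((k:ℝ)-1)*M := by nlinarith [hM.1, hM.2]
  constructor
  · apply div_pos _ hden; nlinarith [hM.1]
  · rw [div_lt_one hden]; nlinarith [hM.2]

lemma compFrom_averaged (T : ℕ → H → H) (M : ℝ) (hM : M ∈ Set.Ioo (0:ℝ) 1) :
    ∀ (k : ℕ), 1 ≤ k → ∀ (i : ℕ), (∀ j, i ≤ j → j < i + k → IsAveragedOp M (T j)) →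
    IsAveragedOp ((k:ℝ)*M/(1+((k:ℝ)-1)*M)) (compFrom T i k) := by
  intro k
  induction k with
  | zero => omega
  | succ k ih =>
    intro _ i hj
    rcases Nat.eq_or_lt_of_le (Nat.one_le_iff_ne_zero.mpr (Nat.succ_ne_zero k)) with h | h
    · -- k = 0 case: k+1 = 1
      have hk0 : k = 0 := by omega
      subst hk0
      have : compFrom T i 1 = T i ∘ (id : H → H) := rfl
      rw [this]
      have hTi : IsAveragedOp M (T i) := hj i le_rfl (by omega)
      have : (((1:ℕ):ℝ)*M/(1+(((1:ℕ):ℝ)-1)*M)) = M := by norm_num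
      rw [this]
      simpa [Function.comp_id] using hTi
    · have hk1 : 1 ≤ k := by omega
      have hrest : IsAveragedOp ((k:ℝ)*M/(1+((k:ℝ)-1)*M)) (compFrom T (i+1) k) := by
        apply ih hk1 (i+1)
        intro j hj1 hj2
        exact hj j (by omega) (by omega)
      set β := (k:ℝ)*M/(1+((k:ℝ)-1)*M) with hβ
      have hβmem := beta_mem M hM k hk1
      have hTi : IsAveragedOp M (T i) := hj i le_rfl (by omega)
      have hcomp := avg_comp hM hβmem hTi hrest
      have heq : (M+β-2*M*β)/(1-M*β) = ((k:ℝ)+1)*M/(1+(((k:ℝ)+1)-1)*M) := by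
        have hk1' : (1:ℝ) ≤ (k:ℝ) := by exact_mod_cast hk1
        have hden : (0:ℝ) < 1 + ((k:ℝ)-1)*M := by nlinarith [hM.1, hM.2]
        have hdne : (1:ℝ) + ((k:ℝ)-1)*M ≠ 0 := hden.ne'
        have d1 : (0:ℝ) < 1 - M*β := by nlinarith [hβmem.1, hβmem.2, hM.1, hM.2]
        have d2 : (0:ℝ) < 1+(((k:ℝ)+1)-1)*M := by nlinarith [hM.1]
        rw [div_eq_div_iff d1.ne' d2.ne', hβ]
        field_simp [show (1:ℝ) + M*((k:ℝ)-1) ≠ 0 by contrapose! hdne; linarith]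
        ring
      have hcast : ((k:ℝ)+1) = ((k+1 : ℕ) : ℝ) := by push_cast; ring
      rw [heq, hcast] at hcomp
      have : compFrom T i (k+1) = T i ∘ compFrom T (i+1) k := rfl
      rw [this]
      exact hcomp

lemma inexact_err (T : ℕ → H → H) (e : ℕ → H) :
    ∀ (k i : ℕ), (∀ j, i ≤ j → j < i + k → IsNonexpansiveOp (T j)) → ∀ (x : H),
    ‖inexactFrom T e i k x - compFrom T i k x‖ ≤ ∑ j ∈ Finset.Ico i (i+k), ‖e j‖ := by
  intro k
  induction k with
  | zero => intro i _ x; simp [inexactFrom, compFrom]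
  | succ k ih =>
    intro i hj x
    have h1 : inexactFrom T e i (k+1) x = T i (inexactFrom T e (i+1) k x) + e i := rfl
    have h2 : compFrom T i (k+1) x = T i (compFrom T (i+1) k x) := rfl
    rw [h1, h2]
    have h3 : T i (inexactFrom T e (i+1) k x) + e i - T i (compFrom T (i+1) k x)
        = (T i (inexactFrom T e (i+1) k x) - T i (compFrom T (i+1) k x)) + e i := by abel
    rw [h3]
    have h4 := norm_add_le (T i (inexactFrom T e (i+1) k x) - T i (compFrom T (i+1) k x)) (e i)
    have h5 := hj i le_rfl (by omega) (inexactFrom T e (i+1) k x) (compFrom T (i+1) k x)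
    have h6 := ih (i+1) (fun j hj1 hj2 => hj j (by omega) (by omega)) x
    have h7 : ∑ j ∈ Finset.Ico i (i+(k+1)), ‖e j‖
        = ‖e i‖ + ∑ j ∈ Finset.Ico (i+1) (i+1+k), ‖e j‖ := by
      have h8 : i+(k+1) = (i+1)+k := by omega
      rw [h8, Finset.sum_eq_sum_Ico_succ_bot (by omega : i < i+1+k)]
    linarith

set_option maxHeartbeats 1000000 in
theorem statement2
    (m : ℕ) (hm : 1 ≤ m)
    (αi : ℕ → ℝ) (T : ℕ → H → H) (e : ℕ → ℕ → H)
    (hαi : ∀ i ∈ Finset.Icc 1 m, αi i ∈ Set.Ioo (0 : ℝ) 1)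
    (hT : ∀ i ∈ Finset.Icc 1 m, IsAveragedOp (αi i) (T i))
    (M α : ℝ)
    (hM1 : ∀ i ∈ Finset.Icc 1 m, αi i ≤ M)
    (hM2 : ∃ i ∈ Finset.Icc 1 m, αi i = M)
    (hα : α = (m : ℝ) * M / (1 + ((m : ℝ) - 1) * M))
    (lam : ℕ → ℝ) (hlam : ∀ n, lam n ∈ Set.Ioo (0 : ℝ) (1 / α))
    (hfix : ∃ x : H, compFrom T 1 m x = x)
    (hdiv : ¬ Summable (fun n => lam n * (1 - α * lam n)))
    (herr : ∀ i ∈ Finset.Icc 1 m, Summable (fun n => lam n * ‖e i n‖))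
    (z : ℕ → H)
    (hz : ∀ n, z (n + 1) = z n + lam n • (inexactFrom T (fun i => e i n) 1 m (z n) - z n)) :
    Tendsto (fun n => compFrom T 1 m (z n) - z n) atTop (nhds 0) := by
  obtain ⟨i0, hi0, hi0M⟩ := hM2
  have hM : M ∈ Set.Ioo (0:ℝ) 1 := hi0M ▸ hαi i0 hi0
  have hαmem : α ∈ Set.Ioo (0:ℝ) 1 := hα ▸ beta_mem M hM m hm
  have hα0 : 0 < α := hαmem.1
  have hα1 : α < 1 := hαmem.2
  -- the composition is α-averaged
  have hmem : ∀ j, 1 ≤ j → j < 1 + m → j ∈ Finset.Icc 1 m := by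
    intro j h1 h2; simp only [Finset.mem_Icc]; omega
  have hTavg : IsAveragedOp α (compFrom T 1 m) := by
    rw [hα]
    apply compFrom_averaged T M hM m hm 1
    intro j hj1 hj2
    exact avg_mono (hαi j (hmem j hj1 hj2)) hM (hM1 j (hmem j hj1 hj2)) (hT j (hmem j hj1 hj2))
  obtain ⟨R, hR, hTR⟩ := hTavg
  obtain ⟨x, hx⟩ := hfix
  have hRx : R x = x := by
    have h1 := hTR x
    rw [hx] at h1
    have h2 : α • (R x - x) = 0 := by
      calc α • (R x - x) = ((1-α) • x + α • R x) - x := by module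
        _ = x - x := by rw [← h1]
        _ = 0 := sub_self x
    have h3 : R x - x = 0 := by
      rcases smul_eq_zero.mp h2 with h | h
      · exact absurd h hα0.ne'
      · exact h
    exact sub_eq_zero.mp h3
  -- errors
  set ε : ℕ → H := fun n => inexactFrom T (fun i => e i n) 1 m (z n) - compFrom T 1 m (z n)
    with hεdef
  have hεbound : ∀ n, ‖ε n‖ ≤ ∑ i ∈ Finset.Icc 1 m, ‖e i n‖ := by
    intro n
    have h1 := inexact_err T (fun i => e i n) m 1
      (fun j hj1 hj2 => avg_nonexp (hαi j (hmem j hj1 hj2)) (hT j (hmem j hj1 hj2))) (z n)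
    have h2 : Finset.Ico 1 (1+m) = Finset.Icc 1 m := by
      rw [Nat.add_comm, Finset.Ico_add_one_right_eq_Icc]
    rw [h2] at h1
    exact h1
  set η : ℕ → ℝ := fun n => lam n * ‖ε n‖ with hηdef
  have hη0 : ∀ n, 0 ≤ η n := fun n => mul_nonneg (hlam n).1.le (norm_nonneg _)
  have hηsum : Summable η := by
    have hEsum : Summable (fun n => ∑ i ∈ Finset.Icc 1 m, lam n * ‖e i n‖) :=
      summable_sum (fun i hi => herr i hi)
    apply Summable.of_nonneg_of_le hη0 _ hEsum
    intro n
    show lam n * ‖ε n‖ ≤ _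
    rw [← Finset.mul_sum]
    exact mul_le_mul_of_nonneg_left (hεbound n) (hlam n).1.le
  set μ : ℕ → ℝ := fun n => α * lam n with hμdef
  have hμ0 : ∀ n, 0 < μ n := fun n => mul_pos hα0 (hlam n).1
  have hμ1 : ∀ n, μ n < 1 := by
    intro n
    have h1 := (hlam n).2
    rw [lt_div_iff₀ hα0] at h1
    calc μ n = lam n * α := mul_comm _ _
      _ < 1 := h1
  -- recurrence
  have hrec : ∀ n, z (n+1) = z n + μ n • (R (z n) - z n) + lam n • ε n := by
    intro n
    rw [hz n]
    have h1 : inexactFrom T (fun i => e i n) 1 m (z n) = compFrom T 1 m (z n) +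
        (inexactFrom T (fun i => e i n) 1 m (z n) - compFrom T 1 m (z n)) := by
      abel
    show z n + lam n • (inexactFrom T (fun i => e i n) 1 m (z n) - z n)
        = z n + (α * lam n) • (R (z n) - z n) + lam n •
          (inexactFrom T (fun i => e i n) 1 m (z n) - compFrom T 1 m (z n))
    rw [h1, hTR (z n)]
    module
  set t : ℕ → ℝ := fun n => ‖R (z n) - z n‖ with htdef
  set c : ℕ → ℝ := fun n => ‖z n - x‖ with hcdef
  have ht0 : ∀ n, 0 ≤ t n := fun n => norm_nonneg _
  -- t step inequality
  have ht_step : ∀ n, t (n+1) ≤ t n + 2 * η n := by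
    intro n
    have e1 : R (z (n+1)) - z (n+1)
        = (R (z (n+1)) - R (z n)) + ((1 - μ n) • (R (z n) - z n) - lam n • ε n) := by
      rw [hrec n]; module
    have e2 : z (n+1) - z n = μ n • (R (z n) - z n) + lam n • ε n := by
      rw [hrec n]; module
    have h1 : ‖R (z (n+1)) - R (z n)‖ ≤ ‖z (n+1) - z n‖ := hR _ _
    have h2 : ‖z (n+1) - z n‖ ≤ μ n * t n + η n := by
      rw [e2]
      calc ‖μ n • (R (z n) - z n) + lam n • ε n‖
          ≤ ‖μ n • (R (z n) - z n)‖ + ‖lam n • ε n‖ := norm_add_le _ _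
        _ = μ n * t n + η n := by
            rw [norm_smul, norm_smul, Real.norm_eq_abs, Real.norm_eq_abs,
              abs_of_pos (hμ0 n), abs_of_pos (hlam n).1]
    have h3 : t (n+1) ≤ ‖R (z (n+1)) - R (z n)‖ + (‖(1 - μ n) • (R (z n) - z n)‖ + ‖lam n • ε n‖) := by
      show ‖R (z (n+1)) - z (n+1)‖ ≤ _
      calc ‖R (z (n+1)) - z (n+1)‖
          = ‖(R (z (n+1)) - R (z n)) + ((1 - μ n) • (R (z n) - z n) - lam n • ε n)‖ := by rw [← e1]
        _ ≤ ‖R (z (n+1)) - R (z n)‖ + ‖(1 - μ n) • (R (z n) - z n) - lam n • ε n‖ := norm_add_le _ _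
        _ ≤ _ := by gcongr; exact norm_sub_le _ _
    have h4 : ‖(1 - μ n) • (R (z n) - z n)‖ = (1 - μ n) * t n := by
      rw [norm_smul, Real.norm_eq_abs, abs_of_pos (by linarith [hμ1 n])]
    have h5 : ‖lam n • ε n‖ = η n := by
      rw [norm_smul, Real.norm_eq_abs, abs_of_pos (hlam n).1]
    rw [h4, h5] at h3
    have hμt : 0 ≤ μ n * t n := mul_nonneg (hμ0 n).le (ht0 n)
    nlinarith [h1, h2, h3, hμ0 n, hμ1 n, ht0 n]
  -- c inequalities
  have hstep : ∀ n, c (n+1) ≤ c n + η n ∧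
      c (n+1)^2 ≤ c n^2 - μ n * (1 - μ n) * t n^2 + (2 * c n + η n) * η n := by
    intro n
    set w : H := z n + μ n • (R (z n) - z n) with hwdef
    have hw1 : w - x = (1 - μ n) • (z n - x) + μ n • (R (z n) - x) := by
      rw [hwdef]; module
    have hkid := key_identity (μ n) (z n - x) (R (z n) - x)
    have hb : ‖R (z n) - x‖ ≤ ‖z n - x‖ := by
      have := hR (z n) x; rwa [hRx] at this
    have habs : ‖(z n - x) - (R (z n) - x)‖ = t n := by
      rw [htdef]
      have : (z n - x) - (R (z n) - x) = -(R (z n) - z n) := by abel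
      rw [this, norm_neg]
    have hcn : c n = ‖z n - x‖ := rfl
    have hw2 : ‖w - x‖^2 ≤ c n^2 - μ n * (1 - μ n) * t n^2 := by
      rw [hw1]
      rw [habs] at hkid
      have hb2 : ‖R (z n) - x‖^2 ≤ ‖z n - x‖^2 := by
        nlinarith [hb, norm_nonneg (R (z n) - x)]
      have hb3 : μ n * ‖R (z n) - x‖^2 ≤ μ n * ‖z n - x‖^2 :=
        mul_le_mul_of_nonneg_left hb2 (hμ0 n).le
      have hcn2 : c n^2 = ‖z n - x‖^2 := by rw [hcn]
      linarith [hkid, hb3, hcn2]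
    have hμt2 : 0 ≤ μ n * (1 - μ n) * t n^2 := by
      apply mul_nonneg (mul_nonneg (hμ0 n).le (by linarith [hμ1 n])) (sq_nonneg _)
    have hwx : ‖w - x‖ ≤ c n := by
      nlinarith [hw2, norm_nonneg (w - x), norm_nonneg (z n - x), hμt2]
    have hz1 : z (n+1) - x = (w - x) + lam n • ε n := by
      rw [hrec n, hwdef]; module
    have hc1 : c (n+1) ≤ ‖w - x‖ + η n := by
      show ‖z (n+1) - x‖ ≤ _
      rw [hz1]
      calc ‖(w - x) + lam n • ε n‖ ≤ ‖w - x‖ + ‖lam n • ε n‖ := norm_add_le _ _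
        _ = ‖w - x‖ + η n := by
            rw [norm_smul, Real.norm_eq_abs, abs_of_pos (hlam n).1]
    have hc0' : (0:ℝ) ≤ c (n+1) := norm_nonneg (z (n+1) - x)
    have hsq : c (n+1)^2 ≤ (‖w - x‖ + η n)^2 := by nlinarith [hc1, hc0']
    constructor
    · linarith [hc1, hwx]
    · nlinarith [hsq, hw2, hwx, hη0 n, norm_nonneg (w - x)]
  set S : ℝ := ∑' n, η n with hSdef
  have hS0 : 0 ≤ S := tsum_nonneg hη0
  have hpartial : ∀ n, ∑ k ∈ Finset.range n, η k ≤ S :=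
    fun n => Summable.sum_le_tsum _ (fun i _ => hη0 i) hηsum
  have hηS : ∀ n, η n ≤ S := fun n => Summable.le_tsum hηsum n (fun i _ => hη0 i)
  have hcbound : ∀ n, c n ≤ c 0 + S := by
    have h : ∀ n, c n ≤ c 0 + ∑ k ∈ Finset.range n, η k := by
      intro n
      induction n with
      | zero => simp
      | succ n ih =>
          rw [Finset.sum_range_succ]
          linarith [(hstep n).1]
    exact fun n => (h n).trans (by linarith [hpartial n])
  set K : ℝ := 2 * (c 0 + S) + S with hKdef
  have hK0 : 0 ≤ K := by
    have := norm_nonneg (z 0 - x)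
    rw [hKdef]; rw [hcdef] at *; positivity
  have hkey2 : ∀ n, μ n * (1 - μ n) * t n^2 ≤ c n^2 - c (n+1)^2 + K * η n := by
    intro n
    have h1 := (hstep n).2
    have h2 := hcbound n
    have h3 := hηS n
    have h4 := hη0 n
    nlinarith [h1, h2, h3, h4]
  set g : ℕ → ℝ := fun n => μ n * (1 - μ n) * t n^2 with hgdef
  have hg0 : ∀ n, 0 ≤ g n := fun n =>
    mul_nonneg (mul_nonneg (hμ0 n).le (by linarith [hμ1 n])) (sq_nonneg _)
  have hgsum : Summable g := by
    apply summable_of_sum_range_le hg0 (c := c 0^2 + K * S)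
    intro n
    have h : ∑ k ∈ Finset.range n, g k ≤ c 0^2 - c n^2 + K * ∑ k ∈ Finset.range n, η k := by
      induction n with
      | zero => simp
      | succ n ih =>
          rw [Finset.sum_range_succ, Finset.sum_range_succ]
          have := hkey2 n
          have hgn : g n = μ n * (1 - μ n) * t n ^ 2 := rfl
          linarith [this, ih, hgn]
    have hc2 : 0 ≤ c n^2 := sq_nonneg _
    nlinarith [h, hc2, hpartial n, hK0]
  -- convergence of t
  set a : ℕ → ℝ := fun n => t n - 2 * ∑ k ∈ Finset.range n, η k with hadef
  have ha_anti : Antitone a := by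
    apply antitone_nat_of_succ_le
    intro n
    rw [hadef]
    simp only
    rw [Finset.sum_range_succ]
    linarith [ht_step n]
  have ha_bdd : BddBelow (Set.range a) := by
    refine ⟨-2*S, ?_⟩
    rintro y ⟨n, rfl⟩
    rw [hadef]
    simp only
    linarith [ht0 n, hpartial n]
  have ha_tend : Tendsto a atTop (nhds (⨅ n, a n)) := tendsto_atTop_ciInf ha_anti ha_bdd
  have hpar_tend : Tendsto (fun n => ∑ k ∈ Finset.range n, η k) atTop (nhds S) :=
    hηsum.hasSum.tendsto_sum_nat
  set L : ℝ := (⨅ n, a n) + 2*S with hLdef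
  have ht_tend : Tendsto t atTop (nhds L) := by
    have h1 : Tendsto (fun n => a n + 2 * ∑ k ∈ Finset.range n, η k) atTop (nhds L) := by
      rw [hLdef]
      exact ha_tend.add (hpar_tend.const_mul 2)
    convert h1 using 2 with n
    rw [hadef]; ring
  have hL0 : 0 ≤ L := le_of_tendsto_of_tendsto' tendsto_const_nhds ht_tend ht0
  have hLzero : L = 0 := by
    by_contra hne
    have hLpos : 0 < L := lt_of_le_of_ne hL0 (Ne.symm hne)
    have hev : ∀ᶠ n in atTop, L/2 ≤ t n :=
      ht_tend.eventually (eventually_ge_nhds (by linarith))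
    obtain ⟨N, hN⟩ := eventually_atTop.mp hev
    have h1 : Summable (fun n => g (n+N)) := (summable_nat_add_iff N).2 hgsum
    have h2 : Summable (fun n => (4/L^2) * g (n+N)) := h1.mul_left _
    have h3 : Summable (fun n => μ (n+N) * (1-μ (n+N))) := by
      apply Summable.of_nonneg_of_le
        (fun n => mul_nonneg (hμ0 _).le (by linarith [hμ1 (n+N)])) _ h2
      intro n
      have htN : L/2 ≤ t (n+N) := hN (n+N) (by omega)
      have ht2 : L^2 ≤ 4 * t (n+N)^2 := by nlinarith [htN, hLpos]
      have hμn : 0 ≤ μ (n+N) * (1-μ (n+N)) :=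
        mul_nonneg (hμ0 _).le (by linarith [hμ1 (n+N)])
      rw [hgdef]
      simp only
      rw [div_mul_eq_mul_div, le_div_iff₀ (by positivity : (0:ℝ) < L^2)]
      nlinarith [ht2, hμn]
    have h4 : Summable (fun n => μ n * (1-μ n)) := (summable_nat_add_iff N).1 h3
    apply hdiv
    have h5 := h4.mul_left α⁻¹
    have h6 : (fun n => α⁻¹ * (μ n * (1-μ n))) = fun n => lam n * (1 - α * lam n) := by
      funext n
      rw [hμdef]
      simp only
      field_simp
    rwa [h6] at h5
  rw [hLzero] at ht_tend
  have hfin : ∀ n, compFrom T 1 m (z n) - z n = α • (R (z n) - z n) := by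
    intro n; rw [hTR (z n)]; module
  have hgoal : Tendsto (fun n => R (z n) - z n) atTop (nhds 0) := by
    rw [tendsto_zero_iff_norm_tendsto_zero]
    exact ht_tend
  have := hgoal.const_smul α
  simp only [smul_zero] at this
  convert this using 2 with n
  exact hfin n
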